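/- Let λ ∈ ℝⁿ and let D = diag(λ). For every vector v in the permutation polytope P_λ (the convex hull of all permutations of λ), there exists an n×n unitary matrix U such that the diagonal of U D U* equals v, i.e. (U D U*)ᵢᵢ = vᵢ for all i = 1,…,n. -/

import Mathlib

open Matrix Finset

namespace SchurHornAux

/-- Sum of positive parts functional used to express majorization. -/
noncomputable def S {ι : Type*} [Fintype ι] (w : ι → ℝ) (t : ℝ) : ℝ :=
  ∑ j, max (w j - t) 0

lemma S_nonneg {ι : Type*} [Fintype ι] (w : ι → ℝ) (t : ℝ) : 0 ≤ S w t :=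
  Finset.sum_nonneg fun _ _ => le_max_right _ _

lemma single_le_S {ι : Type*} [Fintype ι] (w : ι → ℝ) (t : ℝ) (j : ι) :
    max (w j - t) 0 ≤ S w t := by
  unfold S
  exact Finset.single_le_sum (f := fun j => max (w j - t) 0)
    (fun _ _ => le_max_right _ _) (Finset.mem_univ j)

lemma S_comp_perm {ι : Type*} [Fintype ι] (w : ι → ℝ) (σ : Equiv.Perm ι) (t : ℝ) :
    S (w ∘ σ) t = S w t :=
  Fintype.sum_equiv σ _ _ (fun _ => rfl)

lemma maj_of_mem {n : ℕ} {lam v : Fin n → ℝ}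
    (hv : v ∈ convexHull ℝ {w : Fin n → ℝ | ∃ σ : Equiv.Perm (Fin n), w = lam ∘ σ}) :
    (∀ t, S v t ≤ S lam t) ∧ ∑ j, v j = ∑ j, lam j := by
  set C : Set (Fin n → ℝ) := {w | (∀ t, S w t ≤ S lam t) ∧ ∑ j, w j = ∑ j, lam j} with hC
  have hsub : {w : Fin n → ℝ | ∃ σ : Equiv.Perm (Fin n), w = lam ∘ σ} ⊆ C := by
    rintro w ⟨σ, rfl⟩
    refine ⟨fun t => le_of_eq (S_comp_perm lam σ t), ?_⟩
    exact Fintype.sum_equiv σ _ _ (fun _ => rfl)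
  have hconv : Convex ℝ C := by
    rintro x hx y hy p q hp hq hpq
    constructor
    · intro t
      have hx1 := hx.1 t; have hy1 := hy.1 t
      have : S (p • x + q • y) t ≤ p * S x t + q * S y t := by
        unfold S
        rw [Finset.mul_sum, Finset.mul_sum, ← Finset.sum_add_distrib]
        refine Finset.sum_le_sum fun j _ => ?_
        have h1 : p * max (x j - t) 0 + q * max (y j - t) 0 ≥ 0 := by
          have := le_max_right (x j - t) 0
          have := le_max_right (y j - t) 0
          positivity
        have h2 : (p • x + q • y) j - t ≤ p * max (x j - t) 0 + q * max (y j - t) 0 := by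
          have hx2 : x j - t ≤ max (x j - t) 0 := le_max_left _ _
          have hy2 : y j - t ≤ max (y j - t) 0 := le_max_left _ _
          have : (p • x + q • y) j - t = p * (x j - t) + q * (y j - t) := by
            simp only [Pi.add_apply, Pi.smul_apply, smul_eq_mul]
            linear_combination t * hpq
          rw [this]
          nlinarith
        exact max_le h2 h1
      calc S (p • x + q • y) t ≤ p * S x t + q * S y t := this
        _ ≤ p * S lam t + q * S lam t := by
            have := S_nonneg x t
            nlinarith
        _ = S lam t := by linear_combination (S lam t) * hpq
    · have : ∑ j, (p • x + q • y) j = p * (∑ j, x j) + q * (∑ j, y j) := by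
        simp [Finset.sum_add_distrib, Finset.mul_sum]
      rw [this, hx.2, hy.2]; linear_combination (∑ j, lam j) * hpq
  exact convexHull_min hsub hconv hv

lemma S_update {ι : Type*} [Fintype ι] [DecidableEq ι] (w : ι → ℝ) (x : ι) (r t : ℝ) :
    S (Function.update w x r) t = S w t + max (r - t) 0 - max (w x - t) 0 := by
  unfold S
  have h1 : (fun j => max (Function.update w x r j - t) 0)
      = Function.update (fun j => max (w j - t) 0) x (max (r - t) 0) := by
    funext j
    by_cases h : j = x
    · subst h; simp
    · simp [Function.update_of_ne h]
  rw [h1, Finset.sum_update_of_mem (Finset.mem_univ x), Finset.sdiff_singleton_eq_erase,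
    ← Finset.add_sum_erase Finset.univ (fun j => max (w j - t) 0) (Finset.mem_univ x)]
  ring

/-- Key pointwise estimate: in the middle region, `S v t` is below `S lam t` by
at least `min (t - b) (a - m)`. -/
lemma chain {ι : Type*} [Fintype ι] [DecidableEq ι] {lam v : ι → ℝ}
    (hS : ∀ t, S v t ≤ S lam t)
    {k : ι} {m a b : ℝ} (ha : lam k = a)
    (hvm : ∀ j, v j ≤ m) (hba : ∀ j, lam j ≤ b ∨ a ≤ lam j) (hma : m ≤ a)
    {t : ℝ} (hbt : b < t) (htm : t < m) :
    S v t ≤ S lam t - min (t - b) (a - m) := by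
  set d : ℝ := min (t - b) (a - m) with hd
  have hd0 : 0 ≤ d := le_min (by linarith) (by linarith)
  set F : Finset ι := Finset.univ.filter (fun j => a ≤ lam j) with hF
  set c : ℕ := F.card with hc
  have hkF : k ∈ F := by simp [hF, ha]
  have hc1 : 1 ≤ c := Finset.card_pos.mpr ⟨k, hkF⟩
  -- formula for S lam s on [b, a]
  have hSlam : ∀ s : ℝ, b ≤ s → s ≤ a → S lam s = ∑ j ∈ F, (lam j - s) := by
    intro s hbs hsa
    unfold S
    rw [← Finset.sum_filter_add_sum_filter_not Finset.univ (fun j => a ≤ lam j)]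
    have h1 : ∑ j ∈ F, max (lam j - s) 0 = ∑ j ∈ F, (lam j - s) := by
      refine Finset.sum_congr rfl fun j hj => ?_
      have : a ≤ lam j := (Finset.mem_filter.mp hj).2
      exact max_eq_left (by linarith)
    have h2 : ∑ j ∈ Finset.univ.filter (fun j => ¬ a ≤ lam j), max (lam j - s) 0 = 0 := by
      refine Finset.sum_eq_zero fun j hj => ?_
      have hj' : ¬ a ≤ lam j := (Finset.mem_filter.mp hj).2
      have : lam j ≤ b := (hba j).resolve_right hj'
      exact max_eq_right (by linarith)
    rw [hF] at h1 ⊢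
    rw [h1, h2, add_zero]
  set N : ℕ := (Finset.univ.filter (fun j => t ≤ v j)).card with hN
  set t' : ℝ := t - d with ht'
  have hbt' : b ≤ t' := by
    have : d ≤ t - b := min_le_left _ _
    simp only [ht']; linarith
  have ht'a : t' ≤ a := by simp only [ht']; linarith
  have hta : t ≤ a := by linarith
  have hlam2 : S lam t' = S lam t + c * d := by
    have hform : ∀ s : ℝ, ∑ j ∈ F, (lam j - s) = (∑ j ∈ F, lam j) - c * s := fun s => by
      rw [Finset.sum_sub_distrib, Finset.sum_const, nsmul_eq_mul, ← hc]
    rw [hSlam t' hbt' ht'a, hSlam t (by linarith) hta, hform, hform, ht']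
    ring
  have hv2 : S v t + N * d ≤ S v t' := by
    unfold S
    rw [← Finset.sum_filter_add_sum_filter_not Finset.univ (fun j => t ≤ v j)
      (fun j => max (v j - t) 0),
      ← Finset.sum_filter_add_sum_filter_not Finset.univ (fun j => t ≤ v j)
      (fun j => max (v j - t') 0)]
    have e1 : ∑ j ∈ Finset.univ.filter (fun j => t ≤ v j), max (v j - t') 0
        = ∑ j ∈ Finset.univ.filter (fun j => t ≤ v j), (max (v j - t) 0 + d) := by
      refine Finset.sum_congr rfl fun j hj => ?_
      have hj' : t ≤ v j := (Finset.mem_filter.mp hj).2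
      rw [max_eq_left (by simp only [ht']; linarith), max_eq_left (by linarith)]
      simp only [ht']; ring
    rw [e1, Finset.sum_add_distrib]
    simp only [Finset.sum_const, nsmul_eq_mul, ← hN]
    have e2 : ∑ j ∈ Finset.univ.filter (fun j => ¬ t ≤ v j), max (v j - t) 0
        ≤ ∑ j ∈ Finset.univ.filter (fun j => ¬ t ≤ v j), max (v j - t') 0 := by
      refine Finset.sum_le_sum fun j _ => ?_
      exact max_le_max (by simp only [ht']; linarith) le_rfl
    linarith
  have hMaj := hS t'
  by_cases hNc : c + 1 ≤ N
  · have : (c : ℝ) + 1 ≤ (N : ℝ) := by exact_mod_cast hNc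
    nlinarith
  · push_neg at hNc
    have hNc' : (N : ℝ) ≤ (c : ℝ) := by exact_mod_cast Nat.lt_succ_iff.mp hNc
    have hv3 : S v t ≤ N * (m - t) := by
      unfold S
      rw [← Finset.sum_filter_add_sum_filter_not Finset.univ (fun j => t ≤ v j)]
      have e1 : ∑ j ∈ Finset.univ.filter (fun j => t ≤ v j), max (v j - t) 0
          ≤ ∑ j ∈ Finset.univ.filter (fun j => t ≤ v j), (m - t) := by
        refine Finset.sum_le_sum fun j _ => ?_
        exact max_le (by linarith [hvm j]) (by linarith)
      have e2 : ∑ j ∈ Finset.univ.filter (fun j => ¬ t ≤ v j), max (v j - t) 0 = 0 := by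
        refine Finset.sum_eq_zero fun j hj => ?_
        have hj' : ¬ t ≤ v j := (Finset.mem_filter.mp hj).2
        exact max_eq_right (by push_neg at hj'; linarith)
      rw [e2, add_zero]
      simpa only [Finset.sum_const, nsmul_eq_mul, ← hN] using e1
    have hlam3 : (c : ℝ) * (a - t) ≤ S lam t := by
      rw [hSlam t (by linarith) hta]
      calc (c : ℝ) * (a - t) = ∑ _j ∈ F, (a - t) := by
            simp [Finset.sum_const, ← hc]; ring
        _ ≤ ∑ j ∈ F, (lam j - t) := by
            refine Finset.sum_le_sum fun j hj => ?_
            have : a ≤ lam j := (Finset.mem_filter.mp hj).2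
            linarith
    have hdam : d ≤ a - m := min_le_right _ _
    have hc1' : (1 : ℝ) ≤ (c : ℝ) := by exact_mod_cast hc1
    nlinarith [hvm k]

/-- Core inequality for the majorization reduction step. -/
lemma core {ι : Type*} [Fintype ι] [DecidableEq ι] {lam v : ι → ℝ}
    (hS : ∀ t, S v t ≤ S lam t)
    {k : ι} {m a b : ℝ} (ha : lam k = a)
    (hvm : ∀ j, v j ≤ m) (hba : ∀ j, lam j ≤ b ∨ a ≤ lam j) (hma : m ≤ a) (hbm : b ≤ m)
    (t : ℝ) :
    S v t - max (m - t) 0 ≤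
      S lam t - max (a - t) 0 - max (b - t) 0 + max (a + b - m - t) 0 := by
  rcases le_or_gt t b with htb | hbt
  · -- t ≤ b : reduces to hS t
    rw [max_eq_left (by linarith : (0:ℝ) ≤ m - t), max_eq_left (by linarith : (0:ℝ) ≤ a - t),
      max_eq_left (by linarith : (0:ℝ) ≤ b - t),
      max_eq_left (by linarith : (0:ℝ) ≤ a + b - m - t)]
    linarith [hS t]
  rcases le_or_gt m t with htm | htm
  · -- m ≤ t : LHS = 0
    have hv0 : S v t = 0 := by
      unfold S
      exact Finset.sum_eq_zero fun j _ => max_eq_right (by linarith [hvm j])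
    rw [hv0, max_eq_right (by linarith : m - t ≤ 0), max_eq_right (by linarith : b - t ≤ 0)]
    rcases le_or_gt a t with hat | hat
    · rw [max_eq_right (by linarith : a - t ≤ 0)]
      have := S_nonneg lam t
      have := le_max_right (a + b - m - t) 0
      linarith
    · rw [max_eq_left (by linarith : (0:ℝ) ≤ a - t)]
      have h1 : a - t ≤ S lam t := by
        have := single_le_S lam t k
        rw [ha] at this
        have := max_eq_left (by linarith : (0:ℝ) ≤ a - t)
        linarith [single_le_S lam t k, le_max_left (lam k - t) 0]
      have := le_max_right (a + b - m - t) 0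
      have h2 : max (lam k - t) 0 = a - t := by rw [ha]; exact max_eq_left (by linarith)
      have := single_le_S lam t k
      rw [h2] at this
      linarith
  · -- b < t < m
    have hchain := chain hS ha hvm hba hma hbt htm
    rw [max_eq_left (by linarith : (0:ℝ) ≤ m - t), max_eq_left (by linarith : (0:ℝ) ≤ a - t),
      max_eq_right (by linarith : b - t ≤ 0)]
    rcases le_or_gt t (a + b - m) with htg | htg
    · rw [max_eq_left (by linarith : (0:ℝ) ≤ a + b - m - t)]
      have hdm : min (t - b) (a - m) = t - b := min_eq_left (by linarith)
      rw [hdm] at hchain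
      linarith
    · have hdm : min (t - b) (a - m) = a - m := min_eq_right (by linarith)
      rw [hdm] at hchain
      have := le_max_right (a + b - m - t) 0
      linarith

lemma rot {N : ℕ} (lam : Fin N → ℝ) {k l : Fin N} (hkl : k ≠ l) {m : ℝ}
    (hbm : lam l ≤ m) (hma : m ≤ lam k) :
    ∃ R ∈ Matrix.unitaryGroup (Fin N) ℂ,
      ∀ p q, ¬(p = k ∧ q = l) → ¬(p = l ∧ q = k) →
        (R * Matrix.diagonal (fun j => (lam j : ℂ)) * Rᴴ) p q =
        Matrix.diagonal (fun j =>
          ((Function.update (Function.update lam k m) l (lam k + lam l - m) j : ℝ) : ℂ)) p q := by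
  classical
  obtain ⟨c, s, hcs, hcm⟩ :
      ∃ c s : ℝ, c ^ 2 + s ^ 2 = 1 ∧ c ^ 2 * lam k + s ^ 2 * lam l = m := by
    rcases eq_or_lt_of_le (hbm.trans hma) with hab | hab
    · exact ⟨1, 0, by norm_num, by norm_num; linarith⟩
    · have hab' : 0 < lam k - lam l := by linarith
      have h1 : Real.sqrt ((m - lam l) / (lam k - lam l)) ^ 2 = (m - lam l) / (lam k - lam l) :=
        Real.sq_sqrt (div_nonneg (by linarith) hab'.le)
      have h2 : Real.sqrt ((lam k - m) / (lam k - lam l)) ^ 2 = (lam k - m) / (lam k - lam l) :=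
        Real.sq_sqrt (div_nonneg (by linarith) hab'.le)
      refine ⟨Real.sqrt ((m - lam l) / (lam k - lam l)),
        Real.sqrt ((lam k - m) / (lam k - lam l)), ?_, ?_⟩
      · rw [h1, h2]; field_simp; ring
      · rw [h1, h2]; field_simp; ring
  have hreal2 : s ^ 2 * lam k + c ^ 2 * lam l = lam k + lam l - m := by
    linear_combination (lam k + lam l) * hcs - hcm
  set R : Matrix (Fin N) (Fin N) ℂ := fun p q =>
    if p = k then (if q = k then (c : ℂ) else if q = l then (-(s : ℂ)) else 0)
    else if p = l then (if q = k then (s : ℂ) else if q = l then (c : ℂ) else 0)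
    else if q = p then 1 else 0 with hR
  have hRkk : R k k = (c : ℂ) := by simp [hR]
  have hRkl : R k l = (-(s : ℂ)) := by simp [hR, hkl, hkl.symm]
  have hRlk : R l k = (s : ℂ) := by simp [hR, hkl, hkl.symm]
  have hRll : R l l = (c : ℂ) := by simp [hR, hkl, hkl.symm]
  have hRko : ∀ q, q ≠ k → q ≠ l → R k q = 0 := by intro q h1 h2; simp [hR, h1, h2]
  have hRlo : ∀ q, q ≠ k → q ≠ l → R l q = 0 := by
    intro q h1 h2; simp [hR, hkl.symm, h1, h2]
  have hRo : ∀ p q, p ≠ k → p ≠ l → R p q = if q = p then 1 else 0 := by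
    intro p q h1 h2; simp [hR, h1, h2]
  have hRreal : ∀ p q, star (R p q) = R p q := by
    intro p q
    simp only [hR]
    split_ifs <;> simp
  have hrow : ∀ (g : Fin N → ℂ) (p : Fin N), (∑ r, R p r * g r) =
      if p = k then (c : ℂ) * g k + (-(s : ℂ)) * g l
      else if p = l then (s : ℂ) * g k + (c : ℂ) * g l
      else g p := by
    intro g p
    rcases eq_or_ne p k with rfl | hpk
    · rw [if_pos rfl]
      have hterm : ∀ r, R p r * g r =
          (if r = p then (c : ℂ) * g p else 0) + (if r = l then (-(s : ℂ)) * g l else 0) := by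
        intro r
        rcases eq_or_ne r p with rfl | h1
        · rw [hRkk, if_pos rfl, if_neg hkl, add_zero]
        · rcases eq_or_ne r l with rfl | h2
          · rw [hRkl, if_neg h1, if_pos rfl, zero_add]
          · rw [hRko r h1 h2, if_neg h1, if_neg h2, zero_mul, add_zero]
      rw [Finset.sum_congr rfl (fun r _ => hterm r), Finset.sum_add_distrib,
        Finset.sum_ite_eq' Finset.univ p (fun _ => (c : ℂ) * g p),
        Finset.sum_ite_eq' Finset.univ l (fun _ => (-(s : ℂ)) * g l)]
      simp
    · rw [if_neg hpk]
      rcases eq_or_ne p l with rfl | hpl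
      · rw [if_pos rfl]
        have hterm : ∀ r, R p r * g r =
            (if r = k then (s : ℂ) * g k else 0) + (if r = p then (c : ℂ) * g p else 0) := by
          intro r
          rcases eq_or_ne r k with rfl | h1
          · rw [hRlk, if_pos rfl, if_neg hkl, add_zero]
          · rcases eq_or_ne r p with rfl | h2
            · rw [hRll, if_neg h1, if_pos rfl, zero_add]
            · rw [hRlo r h1 h2, if_neg h1, if_neg h2, zero_mul, add_zero]
        rw [Finset.sum_congr rfl (fun r _ => hterm r), Finset.sum_add_distrib,
          Finset.sum_ite_eq' Finset.univ k (fun _ => (s : ℂ) * g k),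
          Finset.sum_ite_eq' Finset.univ p (fun _ => (c : ℂ) * g p)]
        simp
      · rw [if_neg hpl]
        have hterm : ∀ r, R p r * g r = (if r = p then g p else 0) := by
          intro r
          rw [hRo p r hpk hpl]
          rcases eq_or_ne r p with rfl | h1
          · simp
          · simp [h1]
        rw [Finset.sum_congr rfl (fun r _ => hterm r),
          Finset.sum_ite_eq' Finset.univ p (fun _ => g p)]
        simp
  have hmC : (c : ℂ) * ((lam k : ℝ) * (c : ℂ)) + (-(s : ℂ)) * ((lam l : ℝ) * (-(s : ℂ)))
      = ((m : ℝ) : ℂ) := by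
    have h := congrArg (fun x : ℝ => (x : ℂ)) hcm
    push_cast at h ⊢
    linear_combination h
  have hgC : (s : ℂ) * ((lam k : ℝ) * (s : ℂ)) + (c : ℂ) * ((lam l : ℝ) * (c : ℂ))
      = ((lam k + lam l - m : ℝ) : ℂ) := by
    have h := congrArg (fun x : ℝ => (x : ℂ)) hreal2
    push_cast at h ⊢
    linear_combination h
  have h1C : (c : ℂ) * (c : ℂ) + (-(s : ℂ)) * (-(s : ℂ)) = 1 := by
    have h := congrArg (fun x : ℝ => (x : ℂ)) hcs
    push_cast at h ⊢
    linear_combination h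
  have hU : R ∈ Matrix.unitaryGroup (Fin N) ℂ := by
    rw [Matrix.mem_unitaryGroup_iff]
    ext p q
    have he : (R * star R) p q = ∑ r, R p r * R q r := by
      rw [Matrix.star_eq_conjTranspose, Matrix.mul_apply]
      refine Finset.sum_congr rfl fun r _ => ?_
      rw [Matrix.conjTranspose_apply, hRreal]
    rw [he, hrow (fun r => R q r) p]
    rcases eq_or_ne p k with rfl | hpk
    · rw [if_pos rfl]
      rcases eq_or_ne q p with rfl | hqk
      · rw [hRkk, hRkl, Matrix.one_apply_eq]; exact h1C
      · rcases eq_or_ne q l with rfl | hql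
        · rw [hRlk, hRll, Matrix.one_apply_ne (Ne.symm hqk)]; ring
        · rw [hRo q p hqk hql, hRo q l hqk hql, if_neg (fun h : p = q => hqk h.symm),
            if_neg (Ne.symm hql), Matrix.one_apply_ne (fun h : p = q => hqk h.symm)]
          ring
    · rw [if_neg hpk]
      rcases eq_or_ne p l with rfl | hpl
      · rw [if_pos rfl]
        rcases eq_or_ne q k with rfl | hqk
        · rw [hRkk, hRkl, Matrix.one_apply_ne hpk]; ring
        · rcases eq_or_ne q p with rfl | hql
          · rw [hRlk, hRll, Matrix.one_apply_eq]; linear_combination h1C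
          · rw [hRo q k hqk hql, hRo q p hqk hql, if_neg (Ne.symm hqk),
              if_neg (fun h : p = q => hql h.symm),
              Matrix.one_apply_ne (fun h : p = q => hql h.symm)]
            ring
      · rw [if_neg hpl]
        rcases eq_or_ne q k with rfl | hqk
        · rw [hRko p hpk hpl, Matrix.one_apply_ne hpk]
        · rcases eq_or_ne q l with rfl | hql
          · rw [hRlo p hpk hpl, Matrix.one_apply_ne hpl]
          · rw [hRo q p hqk hql, Matrix.one_apply]
  have hD : ∀ p q, (R * Matrix.diagonal (fun j => (lam j : ℂ)) * Rᴴ) p q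
      = ∑ r, R p r * ((lam r : ℂ) * R q r) := by
    intro p q
    rw [Matrix.mul_assoc, Matrix.mul_apply]
    refine Finset.sum_congr rfl fun r _ => ?_
    rw [Matrix.diagonal_mul, Matrix.conjTranspose_apply, hRreal]
  refine ⟨R, hU, ?_⟩
  intro p q hnkl hnlk
  have hl'k : Function.update (Function.update lam k m) l (lam k + lam l - m) k = m := by
    rw [Function.update_of_ne hkl, Function.update_self]
  have hl'l : Function.update (Function.update lam k m) l (lam k + lam l - m) l
      = lam k + lam l - m := Function.update_self _ _ _
  have hl'o : ∀ j, j ≠ k → j ≠ l →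
      Function.update (Function.update lam k m) l (lam k + lam l - m) j = lam j := by
    intro j h1 h2; rw [Function.update_of_ne h2, Function.update_of_ne h1]
  rw [hD p q, hrow (fun r => (lam r : ℂ) * R q r) p, Matrix.diagonal_apply]
  rcases eq_or_ne p k with rfl | hpk
  · rw [if_pos rfl]
    rcases eq_or_ne q p with rfl | hqk
    · rw [if_pos rfl, hRkk, hRkl, hl'k]; exact hmC
    · rcases eq_or_ne q l with rfl | hql
      · exact absurd ⟨rfl, rfl⟩ hnkl
      · rw [hRo q p hqk hql, hRo q l hqk hql, if_neg (fun h : p = q => hqk h.symm),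
          if_neg (Ne.symm hql)]
        rw [if_neg (fun h : p = q => hqk h.symm)]
        ring
  · rw [if_neg hpk]
    rcases eq_or_ne p l with rfl | hpl
    · rw [if_pos rfl]
      rcases eq_or_ne q k with rfl | hqk
      · exact absurd ⟨rfl, rfl⟩ hnlk
      · rcases eq_or_ne q p with rfl | hql
        · rw [if_pos rfl, hRlk, hRll, hl'l]; exact hgC
        · rw [hRo q k hqk hql, hRo q p hqk hql, if_neg (Ne.symm hqk),
            if_neg (fun h : p = q => hql h.symm)]
          rw [if_neg (fun h : p = q => hql h.symm)]
          ring
    · rw [if_neg hpl]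
      rcases eq_or_ne q k with rfl | hqk
      · rw [hRko p hpk hpl, if_neg hpk, mul_zero]
      · rcases eq_or_ne q l with rfl | hql
        · rw [hRlo p hpk hpl, if_neg hpl, mul_zero]
        · rw [hRo q p hqk hql]
          rcases eq_or_ne p q with rfl | hpq
          · rw [if_pos rfl, if_pos rfl, hl'o p hpk hpl, mul_one]
          · rw [if_neg hpq, mul_zero, if_neg hpq]

lemma permConj {N : ℕ} (σ : Equiv.Perm (Fin N)) :
    ∃ P ∈ Matrix.unitaryGroup (Fin N) ℂ,
      ∀ (M : Matrix (Fin N) (Fin N) ℂ) p q, (P * M * Pᴴ) p q = M (σ p) (σ q) := by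
  classical
  set P : Matrix (Fin N) (Fin N) ℂ := fun p q => if σ p = q then 1 else 0 with hP
  have hrow : ∀ (g : Fin N → ℂ) (p : Fin N), (∑ r, P p r * g r) = g (σ p) := by
    intro g p
    have hterm : ∀ r, P p r * g r = if r = σ p then g (σ p) else 0 := by
      intro r
      rcases eq_or_ne r (σ p) with rfl | h
      · simp [hP]
      · simp [hP, h, Ne.symm h]
    rw [Finset.sum_congr rfl (fun r _ => hterm r),
      Finset.sum_ite_eq' Finset.univ (σ p) (fun _ => g (σ p))]
    simp
  have hPreal : ∀ p q, star (P p q) = P p q := by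
    intro p q; simp only [hP]; split_ifs <;> simp
  have hU : P ∈ Matrix.unitaryGroup (Fin N) ℂ := by
    rw [Matrix.mem_unitaryGroup_iff]
    ext p q
    have he : (P * star P) p q = ∑ r, P p r * P q r := by
      rw [Matrix.star_eq_conjTranspose, Matrix.mul_apply]
      exact Finset.sum_congr rfl fun r _ => by rw [Matrix.conjTranspose_apply, hPreal]
    rw [he, hrow (fun r => P q r) p]
    simp only [hP]
    rcases eq_or_ne p q with rfl | hpq
    · simp
    · rw [if_neg (fun h => hpq (σ.injective h).symm), Matrix.one_apply_ne hpq]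
  refine ⟨P, hU, ?_⟩
  intro M p q
  have h2 : ∀ r, (M * Pᴴ) r q = M r (σ q) := by
    intro r
    rw [Matrix.mul_apply]
    have hterm : ∀ u, M r u * (Pᴴ) u q = P q u * M r u := by
      intro u; rw [Matrix.conjTranspose_apply, hPreal]; ring
    rw [Finset.sum_congr rfl (fun u _ => hterm u), hrow (fun u => M r u) q]
  rw [Matrix.mul_assoc, Matrix.mul_apply]
  calc ∑ r, P p r * (M * Pᴴ) r q = ∑ r, P p r * M r (σ q) :=
        Finset.sum_congr rfl fun r _ => by rw [h2 r]
    _ = M (σ p) (σ q) := hrow (fun r => M r (σ q)) p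

lemma extend {n : ℕ} (k : Fin (n + 1)) (V : Matrix (Fin n) (Fin n) ℂ)
    (hV : V ∈ Matrix.unitaryGroup (Fin n) ℂ) :
    ∃ W ∈ Matrix.unitaryGroup (Fin (n + 1)) ℂ,
      ∀ A : Matrix (Fin (n + 1)) (Fin (n + 1)) ℂ,
        (W * A * Wᴴ) k k = A k k ∧
        ∀ j : Fin n, (W * A * Wᴴ) (k.succAbove j) (k.succAbove j)
          = (V * (A.submatrix k.succAbove k.succAbove) * Vᴴ) j j := by
  classical
  set e : Fin (n + 1) ≃ (Fin n ⊕ Unit) :=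
    (finSuccEquiv' k).trans (Equiv.optionEquivSumPUnit _) with he
  set F : Matrix (Fin n ⊕ Unit) (Fin n ⊕ Unit) ℂ := Matrix.fromBlocks V 0 0 1 with hF
  set W := F.submatrix e e with hW
  have hFH : Fᴴ = Matrix.fromBlocks Vᴴ 0 0 1 := by
    rw [hF, Matrix.fromBlocks_conjTranspose]
    congr 1 <;> simp
  have hVV : V * Vᴴ = 1 := by
    have := Matrix.mem_unitaryGroup_iff.mp hV
    rwa [Matrix.star_eq_conjTranspose] at this
  have hFU : F * Fᴴ = 1 := by
    rw [hF, hFH, Matrix.fromBlocks_multiply]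
    simp [hVV, Matrix.fromBlocks_one]
  have hWU : W ∈ Matrix.unitaryGroup (Fin (n + 1)) ℂ := by
    rw [Matrix.mem_unitaryGroup_iff, Matrix.star_eq_conjTranspose, hW,
      Matrix.conjTranspose_submatrix, Matrix.submatrix_mul_equiv, hFU,
      Matrix.submatrix_one_equiv]
  refine ⟨W, hWU, ?_⟩
  intro A
  set B := A.submatrix ⇑e.symm ⇑e.symm with hB
  have hA : A = B.submatrix e e := by
    rw [hB, Matrix.submatrix_submatrix, Equiv.symm_comp_self, Matrix.submatrix_id_id]
  have hWH : Wᴴ = (Fᴴ).submatrix e e := by rw [hW, Matrix.conjTranspose_submatrix]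
  have hmul : W * A * Wᴴ = (F * B * Fᴴ).submatrix e e := by
    rw [hA, hWH, hW, Matrix.submatrix_mul_equiv, Matrix.submatrix_mul_equiv]
  have hFBF : F * B * Fᴴ = Matrix.fromBlocks
      (V * B.toBlocks₁₁ * Vᴴ) (V * B.toBlocks₁₂) (B.toBlocks₂₁ * Vᴴ) B.toBlocks₂₂ := by
    conv_lhs => rw [← Matrix.fromBlocks_toBlocks B]
    rw [hF, hFH, Matrix.fromBlocks_multiply, Matrix.fromBlocks_multiply]
    congr 1 <;> simp [Matrix.mul_assoc]
  have hek : e k = Sum.inr PUnit.unit := by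
    simp [he, finSuccEquiv'_at]
  have hesa : ∀ j : Fin n, e (k.succAbove j) = Sum.inl j := by
    intro j; simp [he, finSuccEquiv'_succAbove]
  have h11 : B.toBlocks₁₁ = A.submatrix k.succAbove k.succAbove := by
    ext j j'
    have h1 : e.symm (Sum.inl j) = k.succAbove j := by
      rw [Equiv.symm_apply_eq, hesa]
    have h2 : e.symm (Sum.inl j') = k.succAbove j' := by
      rw [Equiv.symm_apply_eq, hesa]
    simp [Matrix.toBlocks₁₁, hB, h1, h2]
  constructor
  · rw [hmul, Matrix.submatrix_apply, hek, hFBF, Matrix.fromBlocks_apply₂₂]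
    have h2 : e.symm (Sum.inr PUnit.unit) = k := by rw [Equiv.symm_apply_eq, hek]
    simp [Matrix.toBlocks₂₂, hB, h2]
  · intro j
    rw [hmul, Matrix.submatrix_apply, hesa, hFBF, Matrix.fromBlocks_apply₁₁, h11]

lemma sum_update {ι : Type*} [Fintype ι] [DecidableEq ι] (w : ι → ℝ) (x : ι) (r : ℝ) :
    ∑ j, Function.update w x r j = (∑ j, w j) + r - w x := by
  rw [Finset.sum_update_of_mem (Finset.mem_univ x), Finset.sdiff_singleton_eq_erase,
    ← Finset.add_sum_erase Finset.univ w (Finset.mem_univ x)]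
  ring

lemma key (n : ℕ) (lam v : Fin n → ℝ)
    (hS : ∀ t, S v t ≤ S lam t) (hsum : ∑ j, v j = ∑ j, lam j) :
    ∃ U ∈ Matrix.unitaryGroup (Fin n) ℂ,
      ∀ p, (U * Matrix.diagonal (fun j => (lam j : ℂ)) * Uᴴ) p p = (v p : ℂ) := by
  induction n with
  | zero =>
    refine ⟨1, ?_, fun p => p.elim0⟩
    rw [Matrix.mem_unitaryGroup_iff]; simp
  | succ n IH =>
    classical
    -- the maximum of v
    obtain ⟨i, _, hi⟩ := Finset.exists_max_image Finset.univ v ⟨0, Finset.mem_univ 0⟩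
    set m := v i with hm
    have hvm : ∀ j, v j ≤ m := fun j => hi j (Finset.mem_univ j)
    -- choice of k
    have hK : (Finset.univ.filter fun j => m ≤ lam j).Nonempty := by
      by_contra h
      rw [Finset.not_nonempty_iff_eq_empty, Finset.filter_eq_empty_iff] at h
      obtain ⟨j0, _, hj0⟩ := Finset.exists_max_image Finset.univ lam ⟨0, Finset.mem_univ 0⟩
      have h1 : max (v i - lam j0) 0 ≤ S v (lam j0) := single_le_S v (lam j0) i
      have h2 : S lam (lam j0) = 0 :=
        Finset.sum_eq_zero fun j _ => max_eq_right (by linarith [hj0 j (Finset.mem_univ j)])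
      have h3 : ¬ m ≤ lam j0 := h (Finset.mem_univ j0)
      have h4 := hS (lam j0)
      rw [h2] at h4
      have h5 : m - lam j0 ≤ max (v i - lam j0) 0 := by
        rw [hm]; exact le_max_left _ _
      linarith
    obtain ⟨k, hkK, hkmin⟩ := Finset.exists_min_image _ lam hK
    have hma : m ≤ lam k := (Finset.mem_filter.mp hkK).2
    -- the case n = 0 is immediate
    rcases Nat.eq_zero_or_pos n with hn0 | hn1
    · subst hn0
      refine ⟨1, by rw [Matrix.mem_unitaryGroup_iff]; simp, fun p => ?_⟩
      have hp : p = 0 := Fin.eq_zero p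
      have h1 : v 0 = lam 0 := by simpa using hsum
      simp [hp, h1]
    -- choice of l
    have hL : (Finset.univ.filter fun j => j ≠ k ∧ lam j ≤ m).Nonempty := by
      by_contra h
      rw [Finset.not_nonempty_iff_eq_empty, Finset.filter_eq_empty_iff] at h
      have h1 : ∀ j ∈ Finset.univ.erase k, m < lam j := by
        intro j hj
        have hjk := Finset.ne_of_mem_erase hj
        have := h (Finset.mem_univ j)
        push_neg at this
        exact this hjk
      have hne : (Finset.univ.erase k).Nonempty := by
        rw [← Finset.card_pos, Finset.card_erase_of_mem (Finset.mem_univ k),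
          Finset.card_univ, Fintype.card_fin]
        omega
      have h2 : ∑ j ∈ Finset.univ.erase k, m < ∑ j ∈ Finset.univ.erase k, lam j :=
        Finset.sum_lt_sum_of_nonempty hne h1
      have h3 : ∑ j ∈ Finset.univ.erase k, (m : ℝ) = n * m := by
        rw [Finset.sum_const, Finset.card_erase_of_mem (Finset.mem_univ k),
          Finset.card_univ, Fintype.card_fin, nsmul_eq_mul]
        norm_num
      have h4 : ∑ j, lam j = lam k + ∑ j ∈ Finset.univ.erase k, lam j :=
        (Finset.add_sum_erase _ lam (Finset.mem_univ k)).symm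
      have h5 : ∑ j, v j ≤ (n + 1) * m := by
        calc ∑ j, v j ≤ ∑ _j : Fin (n + 1), m := Finset.sum_le_sum fun j _ => hvm j
          _ = (n + 1) * m := by
              rw [Finset.sum_const, Finset.card_univ, Fintype.card_fin, nsmul_eq_mul]
              push_cast; ring
      rw [h3] at h2
      rw [hsum, h4] at h5
      push_cast at h5
      linarith
    obtain ⟨l, hlL, hlmax⟩ := Finset.exists_max_image _ lam hL
    have hlk : l ≠ k := (Finset.mem_filter.mp hlL).2.1
    have hbm : lam l ≤ m := (Finset.mem_filter.mp hlL).2.2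
    have hkl : k ≠ l := Ne.symm hlk
    -- dichotomy
    have hba : ∀ j, lam j ≤ lam l ∨ lam k ≤ lam j := by
      intro j
      by_cases hj : m ≤ lam j
      · exact Or.inr (hkmin j (Finset.mem_filter.mpr ⟨Finset.mem_univ j, hj⟩))
      · push_neg at hj
        have hjk : j ≠ k := fun h => absurd (h ▸ hma) (not_le.mpr hj)
        exact Or.inl (hlmax j (Finset.mem_filter.mpr ⟨Finset.mem_univ j, hjk, hj.le⟩))
    -- reduced vectors
    set g : ℝ := lam k + lam l - m with hg
    set lam' : Fin (n + 1) → ℝ := Function.update (Function.update lam k m) l g with hlam'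
    have hl'k : lam' k = m := by
      rw [hlam', Function.update_of_ne hkl, Function.update_self]
    set v'' : Fin n → ℝ := fun j => v (i.succAbove j) with hv''
    set lam'' : Fin n → ℝ := fun j => lam' (k.succAbove j) with hlam''
    -- S bookkeeping
    have hSv : ∀ t, S v'' t = S v t - max (m - t) 0 := by
      intro t
      unfold S
      simp only [hv'']
      rw [Fin.sum_univ_succAbove (fun j => max (v j - t) 0) i, hm]
      ring
    have hSl' : ∀ t, S lam' t = S lam t + max (m - t) 0 - max (lam k - t) 0
        + max (g - t) 0 - max (lam l - t) 0 := by
      intro t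
      rw [hlam', S_update, S_update, Function.update_of_ne hlk]
    have hSl : ∀ t, S lam'' t = S lam' t - max (m - t) 0 := by
      intro t
      unfold S
      simp only [hlam'']
      rw [Fin.sum_univ_succAbove (fun j => max (lam' j - t) 0) k, hl'k]
      ring
    have hS'' : ∀ t, S v'' t ≤ S lam'' t := by
      intro t
      have hcore := core hS (k := k) rfl hvm hba hma hbm t
      rw [hSv, hSl, hSl']
      have : max (lam k + lam l - m - t) 0 = max (g - t) 0 := by rw [hg]
      linarith [hcore, this.ge, this.le]
    have hsum'' : ∑ j, v'' j = ∑ j, lam'' j := by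
      have h1 := Fin.sum_univ_succAbove v i
      have h2 := Fin.sum_univ_succAbove lam' k
      have h3 : ∑ j, lam' j = ∑ j, lam j := by
        rw [hlam', sum_update, sum_update, Function.update_of_ne hlk, hg]
        ring
      have h4 : ∑ j : Fin n, v'' j = (∑ j, v j) - m := by
        rw [hv'']; rw [h1, hm]; ring
      have h5 : ∑ j : Fin n, lam'' j = (∑ j, lam' j) - m := by
        rw [hlam'']; rw [h2, hl'k]; ring
      rw [h4, h5, h3, hsum]
    -- induction hypothesis
    obtain ⟨V, hVU, hVdiag⟩ := IH lam'' v'' hS'' hsum''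
    -- rotation
    obtain ⟨R, hRU, hRentry⟩ := rot lam hkl hbm hma
    -- extension
    obtain ⟨W, hWU, hWprop⟩ := extend k V hVU
    set D : Matrix (Fin (n + 1)) (Fin (n + 1)) ℂ :=
      Matrix.diagonal (fun j => (lam j : ℂ)) with hD
    set A := R * D * Rᴴ with hA
    have hAkk : A k k = (m : ℂ) := by
      rw [hRentry k k (fun h => hkl h.2) (fun h => hkl h.1),
        Matrix.diagonal_apply_eq]
      rw [Function.update_of_ne hkl, Function.update_self]
    have hAsub : A.submatrix k.succAbove k.succAbove
        = Matrix.diagonal (fun j => (lam'' j : ℂ)) := by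
      ext j j'
      rw [Matrix.submatrix_apply,
        hRentry _ _ (fun h => (Fin.succAbove_ne k j) h.1) (fun h => (Fin.succAbove_ne k j') h.2)]
      rcases eq_or_ne j j' with rfl | hjj
      · rw [Matrix.diagonal_apply_eq, Matrix.diagonal_apply_eq]
      · rw [Matrix.diagonal_apply_ne _ (fun h => hjj (Fin.succAbove_right_injective h)),
          Matrix.diagonal_apply_ne _ hjj]
    obtain ⟨hMk, hMs⟩ := hWprop A
    -- permutation
    set σ : Equiv.Perm (Fin (n + 1)) := (finSuccEquiv' i).trans (finSuccEquiv' k).symm with hσ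
    have hσi : σ i = k := by
      simp [hσ, finSuccEquiv'_at, finSuccEquiv'_symm_none]
    have hσs : ∀ j : Fin n, σ (i.succAbove j) = k.succAbove j := by
      intro j
      simp [hσ, finSuccEquiv'_succAbove, finSuccEquiv'_symm_some]
    obtain ⟨P, hPU, hPprop⟩ := permConj σ
    -- assemble
    refine ⟨P * (W * R), mul_mem hPU (mul_mem hWU hRU), ?_⟩
    have hfin : (P * (W * R)) * D * (P * (W * R))ᴴ = P * (W * A * Wᴴ) * Pᴴ := by
      rw [hA]
      simp only [Matrix.conjTranspose_mul, Matrix.mul_assoc]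
    intro p
    rw [hfin, hPprop (W * A * Wᴴ) p p]
    rcases eq_or_ne p i with rfl | hpi
    · rw [hσi, hMk, hAkk, hm]
    · obtain ⟨j, rfl⟩ := Fin.exists_succAbove_eq hpi
      rw [hσs j, hMs j, hAsub, hVdiag j, hv'']

end SchurHornAux

/-- Horn's part of the Schur–Horn theorem: every vector in the permutation polytope
of `λ` is the diagonal of `U D U*` for some unitary `U`, where `D = diag(λ)`. -/
theorem exists_unitary_diag_conj_eq_of_mem_permutation_polytope
    (n : ℕ) (lam : Fin n → ℝ) (v : Fin n → ℝ)
    (hv : v ∈ convexHull ℝ {w : Fin n → ℝ | ∃ σ : Equiv.Perm (Fin n), w = lam ∘ σ}) :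
    ∃ U ∈ Matrix.unitaryGroup (Fin n) ℂ,
      ∀ i, (U * Matrix.diagonal (fun j => (lam j : ℂ)) * Uᴴ) i i = (v i : ℂ) := by
  obtain ⟨h1, h2⟩ := SchurHornAux.maj_of_mem hv
  exact SchurHornAux.key n lam v h1 h2
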